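/- Every solution of the system u'' + u' + λu + cv = 0, v'' + λv + cu = 0 with 0 < |c| < λ decays exponentially: there exist C ≥ 1 and γ > 0 depending only on λ, c such that u(t)² + v(t)² + u'(t)² + v'(t)² ≤ C e^{−γt}(u(0)² + v(0)² + u'(0)² + v'(0)²) for all t ≥ 0. -/

import Mathlib

private lemma quadN (A B k x y : ℝ) (hB : 0 < B) (hk : k^2 ≤ A*B) :
    0 ≤ A*x^2 + 2*k*(x*y) + B*y^2 := by
  nlinarith [sq_nonneg (k*x + B*y), mul_nonneg (sub_nonneg.2 hk) (sq_nonneg x), sq_nonneg x]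

private lemma Lmain (L c a σ δ τ κ : ℝ) (hc2 : 0 < c^2) (hLpos : 0 < L)
    (hκ1 : κ ≤ 1/2) (hκσ : 4*κ ≤ σ) (hκδ : 2*κ ≤ δ)
    (ha1 : a ≤ 1/4) (hσpos : 0 < σ) (hδpos : 0 < δ)
    (h2a : 2*a^2 ≤ σ) (h8σ : 8*σ ≤ c^2) (h3 : 2*(σ+τ)^2 ≤ δ*c^2)
    (hAu : a*L + τ = σ + δ*c^2/L) (hδL : δ*L = σ/2)
    (u v p q : ℝ) :
    κ*(u^2+v^2+p^2+q^2) ≤ (2-a)*p^2 + δ*q^2 + (a*L+τ)*u^2 + (σ-δ*L)*v^2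
      + a*(u*p) + (σ/c)*(v*p) - ((σ+τ)/c)*(p*q) := by
  have h1 : 0 ≤ (σ/2)*u^2 + 2*(a/2)*(u*p) + (1/4)*p^2 := by
    apply quadN _ _ _ _ _ (by norm_num)
    nlinarith
  have h2 : 0 ≤ (σ/8)*v^2 + 2*(σ/(2*c))*(v*p) + (1/4)*p^2 := by
    apply quadN _ _ _ _ _ (by norm_num)
    have hcc : (0:ℝ) < (2*c)^2 := by nlinarith
    rw [div_pow, div_le_iff₀ hcc]
    nlinarith
  have h3' : 0 ≤ (δ/2)*q^2 + 2*(-((σ+τ)/(2*c)))*(q*p) + (1/4)*p^2 := by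
    apply quadN _ _ _ _ _ (by norm_num)
    have hcc : (0:ℝ) < (2*c)^2 := by nlinarith
    have e : (-((σ+τ)/(2*c)))^2 = (σ+τ)^2/(2*c)^2 := by rw [neg_sq, div_pow]
    rw [e, div_le_iff₀ hcc]
    nlinarith [sq_nonneg (σ+τ)]
  have hpos : (0:ℝ) ≤ δ*c^2/L := by positivity
  have hRu : 0 ≤ (a*L+τ-κ-σ/2)*u^2 := mul_nonneg (by rw [hAu]; linarith) (sq_nonneg u)
  have hRv : 0 ≤ (σ-δ*L-κ-σ/8)*v^2 := mul_nonneg (by rw [hδL]; linarith) (sq_nonneg v)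
  have hRp : 0 ≤ (2-a-κ-3/4)*p^2 := mul_nonneg (by linarith) (sq_nonneg p)
  have hRq : 0 ≤ (δ-κ-δ/2)*q^2 := mul_nonneg (by linarith) (sq_nonneg q)
  have e2 : 2*(σ/(2*c)) = σ/c := by ring
  have e3 : 2*(-((σ+τ)/(2*c))) = -((σ+τ)/c) := by ring
  rw [e2] at h2
  rw [e3] at h3'
  linarith [h1, h2, h3', hRu, hRv, hRp, hRq]

private lemma Llow (L c a σ δ τ w : ℝ)
    (hw1 : w ≤ 1) (hwc : w + |c| ≤ L)
    (hus : a^2 + (τ/c)^2 ≤ w/2) (hvs : (σ/c)^2 + δ^2 ≤ w/2)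
    (u v p q : ℝ) :
    (w/2)*(u^2+v^2+p^2+q^2) ≤ p^2+q^2+L*(u^2+v^2)+2*c*(u*v)
      + a*(u*p)+(τ/c)*(u*q)+(σ/c)*(v*p)-δ*(v*q) := by
  have habs : -(|c| * (u^2+v^2)) ≤ 2*c*(u*v) := by
    rcases abs_cases c with ⟨h1,_⟩|⟨h1,_⟩ <;> rw [h1] <;>
      nlinarith [sq_nonneg (u+v), sq_nonneg (u-v)]
  have e1 : -(a^2*u^2) - (1/4)*p^2 ≤ a*(u*p) := by nlinarith [sq_nonneg (a*u + p/2)]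
  have e2 : -((τ/c)^2*u^2) - (1/4)*q^2 ≤ (τ/c)*(u*q) := by nlinarith [sq_nonneg ((τ/c)*u + q/2)]
  have e3 : -((σ/c)^2*v^2) - (1/4)*p^2 ≤ (σ/c)*(v*p) := by nlinarith [sq_nonneg ((σ/c)*v + p/2)]
  have e4 : -(δ^2*v^2) - (1/4)*q^2 ≤ -(δ*(v*q)) := by nlinarith [sq_nonneg (δ*v - q/2)]
  have cu : 0 ≤ (L - |c| - a^2 - (τ/c)^2 - w/2)*u^2 := mul_nonneg (by linarith) (sq_nonneg u)
  have cv : 0 ≤ (L - |c| - (σ/c)^2 - δ^2 - w/2)*v^2 := mul_nonneg (by linarith) (sq_nonneg v)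
  have cp : 0 ≤ (1 - 1/2 - w/2)*p^2 := mul_nonneg (by linarith) (sq_nonneg p)
  have cq : 0 ≤ (1 - 1/2 - w/2)*q^2 := mul_nonneg (by linarith) (sq_nonneg q)
  linarith [habs, e1, e2, e3, e4, cu, cv, cp, cq]

private lemma Lup (L c a σ δ τ : ℝ) (hL : 0 < L) (u v p q : ℝ) :
    p^2+q^2+L*(u^2+v^2)+2*c*(u*v)+a*(u*p)+(τ/c)*(u*q)+(σ/c)*(v*p)-δ*(v*q)
      ≤ (3+L+c^2+a^2+(τ/c)^2+(σ/c)^2+δ^2)*(u^2+v^2+p^2+q^2) := by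
  have s1 := sq_nonneg (c*u - v)
  have s2 := sq_nonneg (a*u - p)
  have s3 := sq_nonneg ((τ/c)*u - q)
  have s4 := sq_nonneg ((σ/c)*v - p)
  have s5 := sq_nonneg (δ*v + q)
  have gu : 0 ≤ (3 + a^2/2 + (τ/c)^2/2 + (σ/c)^2 + δ^2) * u^2 :=
    mul_nonneg (by positivity) (sq_nonneg u)
  have gv : 0 ≤ ((2:ℝ) + c^2 + a^2 + (τ/c)^2 + (σ/c)^2/2 + δ^2/2) * v^2 :=
    mul_nonneg (by positivity) (sq_nonneg v)
  have gp : 0 ≤ (1 + L + c^2 + a^2 + (τ/c)^2 + (σ/c)^2 + δ^2) * p^2 :=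
    mul_nonneg (by positivity) (sq_nonneg p)
  have gq : 0 ≤ (1 + L + c^2 + a^2 + (τ/c)^2 + (σ/c)^2 + δ^2) * q^2 :=
    mul_nonneg (by positivity) (sq_nonneg q)
  linarith [s1, s2, s3, s4, s5, gu, gv, gp, gq]
set_option maxHeartbeats 1000000 in
theorem stmt_6 (lam c : ℝ) (hlam : 0 < lam) (hc : 0 < |c|) (hclam : |c| < lam) :
    ∃ C γ : ℝ, 1 ≤ C ∧ 0 < γ ∧
      ∀ (u v u' v' u'' v'' : ℝ → ℝ),
        (∀ t, HasDerivAt u (u' t) t) → (∀ t, HasDerivAt u' (u'' t) t) →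
        (∀ t, HasDerivAt v (v' t) t) → (∀ t, HasDerivAt v' (v'' t) t) →
        (∀ t, u'' t + u' t + lam * u t + c * v t = 0) →
        (∀ t, v'' t + lam * v t + c * u t = 0) →
        ∀ t, 0 ≤ t →
          (u t)^2 + (v t)^2 + (u' t)^2 + (v' t)^2
            ≤ C * Real.exp (-γ * t) * ((u 0)^2 + (v 0)^2 + (u' 0)^2 + (v' 0)^2) := by
  have hc0 : c ≠ 0 := by
    intro h; rw [h] at hc; simp at hc
  have hL0 : lam ≠ 0 := ne_of_gt hlam
  have hc2 : 0 < c^2 := by positivity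
  have hsqabs : |c|^2 = c^2 := sq_abs c
  have hcL : c^2 < lam^2 := by nlinarith [abs_nonneg c]
  obtain ⟨D, hDdef⟩ : ∃ D : ℝ, D = lam^2 - c^2 := ⟨_, rfl⟩
  have hDpos : 0 < D := by rw [hDdef]; linarith
  obtain ⟨w, hwdef⟩ : ∃ w : ℝ, w = min 1 (lam - |c|) := ⟨_, rfl⟩
  have hwpos : 0 < w := by rw [hwdef]; exact lt_min one_pos (by linarith)
  have hw1 : w ≤ 1 := by rw [hwdef]; exact min_le_left _ _
  have hw2 : w ≤ lam - |c| := by rw [hwdef]; exact min_le_right _ _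
  obtain ⟨a, hadef⟩ : ∃ a : ℝ, a = min (1/4) (min (D/(8*lam)) (min (D/(8*c^2))
      (min (c^2*lam/(4*D)) (min (w/16) (lam*w/(4*D)))))) := ⟨_, rfl⟩
  have hapos : 0 < a := by
    rw [hadef]
    refine lt_min (by norm_num) (lt_min (by positivity) (lt_min (by positivity)
      (lt_min (by positivity) (lt_min (by positivity) (by positivity)))))
  have ha1 : a ≤ 1/4 := by rw [hadef]; exact min_le_left _ _
  have ha2 : a ≤ D/(8*lam) := by
    rw [hadef]; exact le_trans (min_le_right _ _) (min_le_left _ _)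
  have ha3 : a ≤ D/(8*c^2) := by
    rw [hadef]
    exact le_trans (min_le_right _ _) (le_trans (min_le_right _ _) (min_le_left _ _))
  have ha4 : a ≤ c^2*lam/(4*D) := by
    rw [hadef]
    exact le_trans (min_le_right _ _) (le_trans (min_le_right _ _)
      (le_trans (min_le_right _ _) (min_le_left _ _)))
  have ha5 : a ≤ w/16 := by
    rw [hadef]
    exact le_trans (min_le_right _ _) (le_trans (min_le_right _ _)
      (le_trans (min_le_right _ _) (le_trans (min_le_right _ _) (min_le_left _ _))))
  have ha6 : a ≤ lam*w/(4*D) := by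
    rw [hadef]
    exact le_trans (min_le_right _ _) (le_trans (min_le_right _ _)
      (le_trans (min_le_right _ _) (le_trans (min_le_right _ _) (min_le_right _ _))))
  have ha2' : 8*a*lam ≤ D := by
    rw [le_div_iff₀ (by positivity)] at ha2; linarith
  have ha3' : 8*a*c^2 ≤ D := by
    rw [le_div_iff₀ (by positivity)] at ha3; linarith
  have ha4' : 4*a*D ≤ c^2*lam := by
    rw [le_div_iff₀ (by positivity)] at ha4; linarith
  have ha6' : 4*a*D ≤ lam*w := by
    rw [le_div_iff₀ (by positivity)] at ha6; linarith
  obtain ⟨σ, hσdef⟩ : ∃ σ : ℝ, σ = a*D/(2*lam) := ⟨_, rfl⟩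
  obtain ⟨δ, hδdef⟩ : ∃ δ : ℝ, δ = a*D/(4*lam^2) := ⟨_, rfl⟩
  obtain ⟨τ, hτdef⟩ : ∃ τ : ℝ, τ = (δ - a)*c^2/lam - σ := ⟨_, rfl⟩
  have hσpos : 0 < σ := by rw [hσdef]; positivity
  have hδpos : 0 < δ := by rw [hδdef]; positivity
  have hδL : δ*lam = σ/2 := by rw [hδdef, hσdef]; field_simp; ring
  have hδa : δ ≤ a := by
    rw [hδdef, div_le_iff₀ (by positivity), hDdef]
    linarith [mul_nonneg hapos.le hc2.le,
      mul_nonneg hapos.le (by positivity : (0:ℝ) ≤ lam^2)]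
  have h8σ : 8*σ ≤ c^2 := by
    have : σ ≤ c^2/8 := by
      rw [hσdef, div_le_div_iff₀ (by positivity) (by norm_num)]
      linarith
    linarith
  have h2a : 2*a^2 ≤ σ := by
    rw [hσdef, le_div_iff₀ (by positivity)]
    linarith [mul_le_mul_of_nonneg_left ha2' hapos.le,
      mul_nonneg (mul_nonneg hapos.le hapos.le) hlam.le]
  have hσw : 8*σ ≤ w := by
    have : σ ≤ w/8 := by
      rw [hσdef, div_le_div_iff₀ (by positivity) (by norm_num)]
      linarith
    linarith
  have hAu : a*lam + τ = σ + δ*c^2/lam := by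
    rw [hτdef, hσdef, hδdef, hDdef]; field_simp; ring
  have hστ : σ + τ = (δ - a)*c^2/lam := by rw [hτdef]; ring
  have hda : (δ-a)^2 ≤ a^2 := by
    linarith [mul_nonneg hδpos.le (show (0:ℝ) ≤ 2*a - δ by linarith)]
  have h3 : 2*(σ+τ)^2 ≤ δ*c^2 := by
    have hst : (σ+τ)*lam = (δ-a)*c^2 := by
      rw [hστ]; field_simp
    have hδlam2 : δ*lam^2 = a*D/4 := by rw [hδdef]; field_simp
    have hac : 2*a^2*c^2 ≤ δ*lam^2 := by
      rw [hδlam2]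
      linarith [mul_le_mul_of_nonneg_left ha3' hapos.le,
        mul_nonneg (mul_nonneg hapos.le hapos.le) hc2.le]
    have hkey : 2*((σ+τ)*lam)^2 ≤ δ*lam^2*c^2 := by
      rw [hst]
      linarith [mul_le_mul_of_nonneg_right hda (by positivity : (0:ℝ) ≤ 2*c^4),
        mul_le_mul_of_nonneg_right hac hc2.le]
    have hlam2 : (0:ℝ) < lam^2 := by positivity
    rw [← mul_le_mul_iff_of_pos_right hlam2]
    linarith [hkey]
  have hσc : (σ/c)^2 ≤ σ/8 := by
    rw [div_pow, div_le_div_iff₀ (by positivity) (by norm_num)]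
    linarith [mul_le_mul_of_nonneg_left h8σ hσpos.le]
  have hτc2 : (τ/c)^2 ≤ 2*a^2 + σ/4 := by
    have htauq : τ/c = (δ-a)*c/lam - σ/c := by
      rw [hτdef]; field_simp
    rw [htauq]
    have h1 : ((δ-a)*c/lam)^2 = (δ-a)^2*c^2/lam^2 := by field_simp
    have h2 : ((δ-a)*c/lam)^2 ≤ a^2 := by
      rw [h1, div_le_iff₀ (by positivity)]
      calc (δ-a)^2*c^2 ≤ a^2*c^2 := mul_le_mul_of_nonneg_right hda hc2.le
        _ ≤ a^2*lam^2 := mul_le_mul_of_nonneg_left hcL.le (sq_nonneg a)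
    linarith [hσc, h2, sq_nonneg ((δ-a)*c/lam + σ/c)]
  have haw : a^2 ≤ w/64 := by
    linarith [mul_le_mul ha5 ha1 hapos.le (by positivity : (0:ℝ) ≤ w/16)]
  have hus : a^2 + (τ/c)^2 ≤ w/2 := by
    linarith [hσw, hτc2, haw]
  have hvs : (σ/c)^2 + δ^2 ≤ w/2 := by
    have hd2 : δ^2 ≤ a^2 := by
      linarith [mul_le_mul_of_nonneg_left hδa hδpos.le, mul_le_mul_of_nonneg_left hδa hapos.le]
    linarith [hσc, hσw, haw, hd2]
  obtain ⟨κ, hκdef⟩ : ∃ κ : ℝ, κ = min (1/2) (min (σ/4) (δ/2)) := ⟨_, rfl⟩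
  have hκpos : 0 < κ := by
    rw [hκdef]; exact lt_min (by norm_num) (lt_min (by positivity) (by positivity))
  have hκ1 : κ ≤ 1/2 := by rw [hκdef]; exact min_le_left _ _
  have hκσ : 4*κ ≤ σ := by
    have : κ ≤ σ/4 := by
      rw [hκdef]; exact le_trans (min_le_right _ _) (min_le_left _ _)
    linarith
  have hκδ : 2*κ ≤ δ := by
    have : κ ≤ δ/2 := by
      rw [hκdef]; exact le_trans (min_le_right _ _) (min_le_right _ _)
    linarith
  obtain ⟨M, hMdef⟩ : ∃ M : ℝ, M = 3+lam+c^2+a^2+(τ/c)^2+(σ/c)^2+δ^2 := ⟨_, rfl⟩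
  have hMpos : 0 < M := by rw [hMdef]; positivity
  have hM0 : M ≠ 0 := ne_of_gt hMpos
  obtain ⟨γ, hγdef⟩ : ∃ γ : ℝ, γ = κ/M := ⟨_, rfl⟩
  have hγpos : 0 < γ := by rw [hγdef]; positivity
  refine ⟨max 1 (2*M/w), γ, le_max_left _ _, hγpos, ?_⟩
  intro u v u' v' u'' v'' hu hu' hv hv' hequ heqv t ht
  obtain ⟨N, hNdef⟩ : ∃ N : ℝ → ℝ,
      N = fun s => (u s)^2 + (v s)^2 + (u' s)^2 + (v' s)^2 := ⟨_, rfl⟩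
  obtain ⟨V, hVdef⟩ : ∃ V : ℝ → ℝ,
      V = fun s => (u' s)^2 + (v' s)^2 + lam*((u s)^2 + (v s)^2)
        + 2*c*(u s * v s) + a*(u s * u' s) + (τ/c)*(u s * v' s)
        + (σ/c)*(v s * u' s) - δ*(v s * v' s) := ⟨_, rfl⟩
  obtain ⟨Vd, hVddef⟩ : ∃ Vd : ℝ → ℝ,
      Vd = fun s => -((2-a)*(u' s)^2 + δ*(v' s)^2 + (a*lam+τ)*(u s)^2
        + (σ-δ*lam)*(v s)^2 + a*(u s * u' s) + (σ/c)*(v s * u' s)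
        - ((σ+τ)/c)*(u' s * v' s)) := ⟨_, rfl⟩
  have hVder : ∀ s, HasDerivAt V (Vd s) s := by
    intro s
    have H := ((((((((hu' s).pow 2).add ((hv' s).pow 2)).add
        ((((hu s).pow 2).add ((hv s).pow 2)).const_mul lam)).add
        (((hu s).mul (hv s)).const_mul (2*c))).add
        (((hu s).mul (hu' s)).const_mul a)).add
        (((hu s).mul (hv' s)).const_mul (τ/c))).add
        (((hv s).mul (hu' s)).const_mul (σ/c))).sub
        (((hv s).mul (hv' s)).const_mul δ)
    have e1 : u'' s = -(u' s) - lam*u s - c*v s := by have := hequ s; linarith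
    have e2 : v'' s = -(lam*v s) - c*u s := by have := heqv s; linarith
    rw [hVdef, hVddef]
    simp only []
    refine H.congr_deriv ?_
    rw [e1, e2, hτdef, hσdef, hδdef]
    field_simp
    ring
  have hVdle : ∀ s, Vd s ≤ -γ * V s := by
    intro s
    have hmain := Lmain lam c a σ δ τ κ hc2 hlam hκ1 hκσ hκδ ha1 hσpos hδpos
      h2a h8σ h3 hAu hδL (u s) (v s) (u' s) (v' s)
    have hup := Lup lam c a σ δ τ hlam (u s) (v s) (u' s) (v' s)
    have hNs : Vd s ≤ -(κ * N s) := by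
      simp only [hVddef, hNdef]
      linarith [hmain]
    have hVM : V s ≤ M * N s := by
      simp only [hVdef, hNdef, hMdef]
      linarith [hup]
    have hNnn : 0 ≤ N s := by simp only [hNdef]; positivity
    have hγM : γ * (M * N s) = κ * N s := by
      rw [hγdef]; field_simp
    have h4 := mul_le_mul_of_nonneg_left hVM hγpos.le
    rw [hγM] at h4
    linarith
  have hVlow : ∀ s, (w/2) * N s ≤ V s := by
    intro s
    have := Llow lam c a σ δ τ w hw1 (by linarith) hus hvs (u s) (v s) (u' s) (v' s)
    simp only [hVdef, hNdef]
    linarith [this]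
  have hVup0 : V 0 ≤ M * N 0 := by
    have := Lup lam c a σ δ τ hlam (u 0) (v 0) (u' 0) (v' 0)
    simp only [hVdef, hNdef, hMdef]
    linarith [this]
  obtain ⟨g, hgdef⟩ : ∃ g : ℝ → ℝ, g = fun s => V s * Real.exp (γ * s) := ⟨_, rfl⟩
  have hgder : ∀ s, HasDerivAt g (Vd s * Real.exp (γ*s) + V s * (Real.exp (γ*s) * (γ*1))) s := by
    intro s
    rw [hgdef]
    exact (hVder s).mul (((hasDerivAt_id s).const_mul γ).exp)
  have hganti : Antitone g := by
    apply antitone_of_deriv_nonpos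
    · intro x; exact (hgder x).differentiableAt
    · intro x
      rw [(hgder x).deriv]
      have h1 := hVdle x
      have h2 := Real.exp_pos (γ*x)
      have h3 : 0 ≤ (-γ*(V x) - Vd x) * Real.exp (γ*x) :=
        mul_nonneg (by linarith) h2.le
      linarith [h3]
  have hgt : V t * Real.exp (γ*t) ≤ V 0 := by
    have h := hganti ht
    rw [hgdef] at h
    simpa using h
  have hexp : Real.exp (-γ*t) = (Real.exp (γ*t))⁻¹ := by
    rw [show -γ*t = -(γ*t) by ring, Real.exp_neg]
  have hVt : V t ≤ V 0 * Real.exp (-γ*t) := by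
    rw [hexp, ← div_eq_mul_inv, le_div_iff₀ (Real.exp_pos (γ*t))]
    exact hgt
  have hN0 : 0 ≤ N 0 := by simp only [hNdef]; positivity
  have hexppos := Real.exp_pos (-γ*t)
  have hfinal : N t ≤ (2*M/w) * Real.exp (-γ*t) * N 0 := by
    have h1 : (w/2) * N t ≤ V 0 * Real.exp (-γ*t) := le_trans (hVlow t) hVt
    have h2 : V 0 * Real.exp (-γ*t) ≤ M * N 0 * Real.exp (-γ*t) :=
      mul_le_mul_of_nonneg_right hVup0 hexppos.le
    have h3 : (w/2) * N t ≤ M * N 0 * Real.exp (-γ*t) := le_trans h1 h2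
    have h4 := mul_le_mul_of_nonneg_left h3 (by positivity : (0:ℝ) ≤ 2/w)
    have h5 : (2/w) * ((w/2) * N t) = N t := by field_simp
    have h6 : (2/w) * (M * N 0 * Real.exp (-γ*t)) = (2*M/w) * Real.exp (-γ*t) * N 0 := by
      field_simp
    rw [h5, h6] at h4
    exact h4
  have hCle : 2*M/w ≤ max 1 (2*M/w) := le_max_right _ _
  have hNt : (u t)^2 + (v t)^2 + (u' t)^2 + (v' t)^2 = N t := by rw [hNdef]
  have hN00 : (u 0)^2 + (v 0)^2 + (u' 0)^2 + (v' 0)^2 = N 0 := by rw [hNdef]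
  rw [hNt, hN00]
  calc N t ≤ (2*M/w) * Real.exp (-γ*t) * N 0 := hfinal
    _ ≤ max 1 (2*M/w) * Real.exp (-γ*t) * N 0 := by
        apply mul_le_mul_of_nonneg_right ?_ hN0
        exact mul_le_mul_of_nonneg_right hCle hexppos.le
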